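/- arXiv:1707.01225 — 2 statements merged into one kernel-verified Lean document; each statement's English description precedes it below -/
import Mathlib

section
/- Let K be a positive integer, let R be a real symmetric positive semidefinite K×K matrix, and let R_n be a real symmetric positive definite K×K matrix with eigendecomposition R_n = Φ_n Λ_n Φ_nᵀ, where Φ_n is orthogonal and Λ_n is diagonal with strictly positive diagonal entries. Set W_n = Φ_n Λ_n^{-1/2} and R_adj = W_nᵀ R W_n, and let λ_max be the largest eigenvalue of R_adj. Then the supremum over all nonzero real K×K matrices X of the SNR rescaling functional I(X) = ‖Xᵀ R X‖₂ / ‖Xᵀ R_n X‖₂ equals λ_max, and this supremum is attained at X = W_n (in particular, for every nonzero X the denominator ‖Xᵀ R_n X‖₂ is strictly positive). -/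
open Matrix

/-- The largest eigenvalue of a real K×K matrix, as the supremum of its real spectrum. -/
noncomputable def maxEig {K : ℕ} (A : Matrix (Fin K) (Fin K) ℝ) : ℝ :=
  sSup (spectrum ℝ A)

/-- The spectral (L² operator) norm: ‖X‖₂ = √(λ_max(Xᵀ X)). -/
noncomputable def matSpectralNormL2 {K : ℕ} (X : Matrix (Fin K) (Fin K) ℝ) : ℝ :=
  Real.sqrt (maxEig (Xᵀ * X))

/-- For a diagonal matrix with strictly positive diagonal entries `d`,
`invSqrtDiag d` is the diagonal matrix Λ^{-1/2} of inverse square roots. -/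
noncomputable def invSqrtDiag {K : ℕ} (d : Fin K → ℝ) : Matrix (Fin K) (Fin K) ℝ :=
  Matrix.diagonal fun i => (Real.sqrt (d i))⁻¹

section Aux

variable {K : ℕ}

lemma dot_self_pos {v : Fin K → ℝ} (hv : v ≠ 0) : 0 < v ⬝ᵥ v := by
  obtain ⟨i, hi⟩ := Function.ne_iff.mp hv
  have h1 : (0:ℝ) < v i * v i := mul_self_pos.mpr hi
  have : v ⬝ᵥ v = ∑ j, v j * v j := rfl
  rw [this]
  exact Finset.sum_pos' (fun j _ => mul_self_nonneg _) ⟨i, Finset.mem_univ i, h1⟩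

lemma isGreatest_maxEig (hK : 0 < K) {A : Matrix (Fin K) (Fin K) ℝ}
    (hA : A.IsHermitian) : IsGreatest (spectrum ℝ A) (maxEig A) := by
  have hne : Nonempty (Fin K) := ⟨⟨0, hK⟩⟩
  have hfin : (spectrum ℝ A).Finite := A.finite_real_spectrum
  have hnonempty : (spectrum ℝ A).Nonempty := by
    rw [hA.spectrum_real_eq_range_eigenvalues]
    exact Set.range_nonempty _
  exact ⟨hnonempty.csSup_mem hfin, fun x hx => le_csSup hfin.bddAbove hx⟩

lemma eigenvalues_le_maxEig (hK : 0 < K) {A : Matrix (Fin K) (Fin K) ℝ}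
    (hA : A.IsHermitian) (i : Fin K) : hA.eigenvalues i ≤ maxEig A :=
  (isGreatest_maxEig hK hA).2 (hA.eigenvalues_mem_spectrum_real i)

lemma exists_eigenvalues_eq_maxEig (hK : 0 < K) {A : Matrix (Fin K) (Fin K) ℝ}
    (hA : A.IsHermitian) : ∃ i, hA.eigenvalues i = maxEig A := by
  have h := (isGreatest_maxEig hK hA).1
  rwa [hA.spectrum_real_eq_range_eigenvalues] at h

lemma smul_one_sub_posSemidef (hK : 0 < K) {A : Matrix (Fin K) (Fin K) ℝ}
    (hA : A.IsHermitian) :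
    (maxEig A • (1 : Matrix (Fin K) (Fin K) ℝ) - A).PosSemidef := by
  set U : Matrix (Fin K) (Fin K) ℝ := (hA.eigenvectorUnitary : Matrix (Fin K) (Fin K) ℝ) with hU
  have hdiag : (Matrix.diagonal (fun i => maxEig A - hA.eigenvalues i)).PosSemidef :=
    Matrix.posSemidef_diagonal_iff.mpr fun i => sub_nonneg.mpr (eigenvalues_le_maxEig hK hA i)
  have hUU : U * star U = 1 := Unitary.coe_mul_star_self _
  have key : maxEig A • (1 : Matrix (Fin K) (Fin K) ℝ) - A
      = U * Matrix.diagonal (fun i => maxEig A - hA.eigenvalues i) * star U := by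
    have : Matrix.diagonal (fun i => maxEig A - hA.eigenvalues i)
        = maxEig A • (1 : Matrix (Fin K) (Fin K) ℝ)
          - Matrix.diagonal (RCLike.ofReal ∘ hA.eigenvalues) := by
      rw [Matrix.smul_one_eq_diagonal, ← Matrix.diagonal_sub]
      simp [RCLike.ofReal_real_eq_id]
    have hspec : A = U * Matrix.diagonal (RCLike.ofReal ∘ hA.eigenvalues) * star U :=
      hA.spectral_theorem
    rw [this, Matrix.mul_sub, Matrix.sub_mul, ← hspec]
    congr 1
    rw [Matrix.mul_smul, Matrix.mul_one, Matrix.smul_mul, hUU]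
  rw [key]
  exact hdiag.mul_mul_conjTranspose_same U

lemma quad_le_maxEig (hK : 0 < K) {A : Matrix (Fin K) (Fin K) ℝ}
    (hA : A.IsHermitian) (v : Fin K → ℝ) :
    v ⬝ᵥ (A *ᵥ v) ≤ maxEig A * (v ⬝ᵥ v) := by
  have h := (smul_one_sub_posSemidef hK hA).dotProduct_mulVec_nonneg v
  simp only [star_trivial, Matrix.sub_mulVec, Matrix.smul_mulVec, Matrix.one_mulVec,
    dotProduct_sub, dotProduct_smul, smul_eq_mul] at h
  linarith

lemma maxEig_le (hK : 0 < K) {B : Matrix (Fin K) (Fin K) ℝ} (hB : B.IsHermitian) {t : ℝ}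
    (h : ∀ v : Fin K → ℝ, v ⬝ᵥ (B *ᵥ v) ≤ t * (v ⬝ᵥ v)) : maxEig B ≤ t := by
  obtain ⟨i, hi⟩ := exists_eigenvalues_eq_maxEig hK hB
  set v : Fin K → ℝ := ⇑(hB.eigenvectorBasis i) with hv
  have hv0 : v ≠ 0 := by
    have := hB.eigenvectorBasis.orthonormal.ne_zero i
    intro hcontra
    apply this
    ext j
    exact congrFun hcontra j
  have heig : B *ᵥ v = maxEig B • v := by
    rw [hv, hB.mulVec_eigenvectorBasis, hi]
  have h2 := h v
  rw [heig, dotProduct_smul, smul_eq_mul] at h2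
  exact le_of_mul_le_mul_right h2 (dot_self_pos hv0)

lemma maxEig_nonneg (hK : 0 < K) {M : Matrix (Fin K) (Fin K) ℝ} (hM : M.PosSemidef) :
    0 ≤ maxEig M :=
  le_trans (hM.eigenvalues_nonneg ⟨0, hK⟩) (eigenvalues_le_maxEig hK hM.1 ⟨0, hK⟩)

lemma maxEig_pos (hK : 0 < K) {M : Matrix (Fin K) (Fin K) ℝ} (hM : M.PosSemidef)
    {v : Fin K → ℝ} (hv : 0 < v ⬝ᵥ (M *ᵥ v)) : 0 < maxEig M := by
  have h := quad_le_maxEig hK hM.1 v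
  have hvv : 0 < v ⬝ᵥ v := by
    rcases eq_or_ne v 0 with rfl | hv0
    · simp at hv
    · exact dot_self_pos hv0
  nlinarith

lemma maxEig_mul_self (hK : 0 < K) {M : Matrix (Fin K) (Fin K) ℝ} (hM : M.PosSemidef) :
    maxEig (M * M) = (maxEig M) ^ 2 := by
  have hne : Nonempty (Fin K) := ⟨⟨0, hK⟩⟩
  have hH := hM.1
  set U : Matrix (Fin K) (Fin K) ℝ := (hH.eigenvectorUnitary : Matrix (Fin K) (Fin K) ℝ) with hU
  have hsU : star U * U = 1 := Unitary.coe_star_mul_self _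
  have hdecomp : M * M = U * Matrix.diagonal (fun i => hH.eigenvalues i ^ 2) * star U := by
    have hspec : M = U * Matrix.diagonal (RCLike.ofReal ∘ hH.eigenvalues) * star U :=
      hH.spectral_theorem
    conv_lhs => rw [hspec]
    have key : ∀ X : Matrix (Fin K) (Fin K) ℝ, star U * (U * X) = X := fun X => by
      rw [← Matrix.mul_assoc, hsU, Matrix.one_mul]
    simp only [Matrix.mul_assoc]
    rw [key]
    congr 1
    rw [← Matrix.mul_assoc, Matrix.diagonal_mul_diagonal]
    congr 1
    funext i
    simp [RCLike.ofReal_real_eq_id, sq]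
  rw [hdecomp, maxEig]
  rw [hU, Unitary.spectrum_star_right_conjugate, spectrum_diagonal]
  have hgr : IsGreatest (Set.range fun i => hH.eigenvalues i ^ 2) ((maxEig M) ^ 2) := by
    constructor
    · obtain ⟨i, hi⟩ := exists_eigenvalues_eq_maxEig hK hH
      exact ⟨i, by simp [hi]⟩
    · rintro x ⟨i, rfl⟩
      exact pow_le_pow_left₀ (hM.eigenvalues_nonneg i) (eigenvalues_le_maxEig hK hH i) 2
  exact hgr.csSup_eq

lemma spectralNorm_psd (hK : 0 < K) {M : Matrix (Fin K) (Fin K) ℝ} (hM : M.PosSemidef) :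
    matSpectralNormL2 M = maxEig M := by
  have ht : Mᵀ = M := by
    have h := hM.1
    rwa [Matrix.IsHermitian, Matrix.conjTranspose_eq_transpose_of_trivial] at h
  rw [matSpectralNormL2, ht, maxEig_mul_self hK hM, Real.sqrt_sq (maxEig_nonneg hK hM)]

lemma maxEig_one (hK : 0 < K) : maxEig (1 : Matrix (Fin K) (Fin K) ℝ) = 1 := by
  have hne : Nonempty (Fin K) := ⟨⟨0, hK⟩⟩
  rw [maxEig, show (1 : Matrix (Fin K) (Fin K) ℝ) = Matrix.diagonal (fun _ => (1:ℝ)) from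
    (Matrix.diagonal_one).symm, spectrum_diagonal]
  have : Set.range (fun _ : Fin K => (1:ℝ)) = {1} := by
    ext x; simp
  rw [this, csSup_singleton]

end Aux

section Aux2
variable {K : ℕ}

lemma conj_quad (Y B : Matrix (Fin K) (Fin K) ℝ) (v : Fin K → ℝ) :
    v ⬝ᵥ ((Yᵀ * B * Y) *ᵥ v) = (Y *ᵥ v) ⬝ᵥ (B *ᵥ (Y *ᵥ v)) := by
  rw [← Matrix.mulVec_mulVec, ← Matrix.mulVec_mulVec, Matrix.dotProduct_mulVec,
    Matrix.vecMul_transpose]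

lemma self_quad (Y : Matrix (Fin K) (Fin K) ℝ) (v : Fin K → ℝ) :
    v ⬝ᵥ ((Yᵀ * Y) *ᵥ v) = (Y *ᵥ v) ⬝ᵥ (Y *ᵥ v) := by
  rw [← Matrix.mulVec_mulVec, Matrix.dotProduct_mulVec, Matrix.vecMul_transpose]

end Aux2

/-- The supremum of the SNR rescaling functional
`I(X) = ‖Xᵀ R X‖₂ / ‖Xᵀ Rₙ X‖₂` over nonzero `X` equals the largest eigenvalue of
`R_adj = Wₙᵀ R Wₙ`, and it is attained at `X = Wₙ`; moreover the denominator is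
strictly positive for every nonzero `X`. -/
theorem snr_sup_eq_maxEig (K : ℕ) (hK : 0 < K)
    (R Rn Φ : Matrix (Fin K) (Fin K) ℝ) (d : Fin K → ℝ)
    (hR : R.PosSemidef) (hRn : Rn.PosDef)
    (hΦ : Φᵀ * Φ = 1) (hd : ∀ i, 0 < d i)
    (hdecomp : Rn = Φ * Matrix.diagonal d * Φᵀ)
    (Wn : Matrix (Fin K) (Fin K) ℝ) (hWn : Wn = Φ * invSqrtDiag d)
    (lmax : ℝ) (hlmax : lmax = maxEig (Wnᵀ * R * Wn)) :
    (∀ X : Matrix (Fin K) (Fin K) ℝ, X ≠ 0 → 0 < matSpectralNormL2 (Xᵀ * Rn * X)) ∧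
    IsGreatest {y : ℝ | ∃ X : Matrix (Fin K) (Fin K) ℝ, X ≠ 0 ∧
        y = matSpectralNormL2 (Xᵀ * R * X) / matSpectralNormL2 (Xᵀ * Rn * X)} lmax ∧
    Wn ≠ 0 ∧
    matSpectralNormL2 (Wnᵀ * R * Wn) / matSpectralNormL2 (Wnᵀ * Rn * Wn) = lmax := by
  have hne : Nonempty (Fin K) := ⟨⟨0, hK⟩⟩
  -- Wnᵀ * Rn * Wn = 1
  have hWnT : Wnᵀ = invSqrtDiag d * Φᵀ := by
    rw [hWn, Matrix.transpose_mul, invSqrtDiag, Matrix.diagonal_transpose]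
  have hRnW : Wnᵀ * Rn * Wn = 1 := by
    rw [hWnT, hWn, hdecomp, invSqrtDiag]
    have hcan : ∀ X : Matrix (Fin K) (Fin K) ℝ, Φᵀ * (Φ * X) = X := fun X => by
      rw [← Matrix.mul_assoc, hΦ, Matrix.one_mul]
    simp only [Matrix.mul_assoc]
    rw [hcan, hcan, Matrix.diagonal_mul_diagonal, Matrix.diagonal_mul_diagonal]
    have hentry : (fun i => (Real.sqrt (d i))⁻¹ * (d i * (Real.sqrt (d i))⁻¹))
        = fun _ : Fin K => (1:ℝ) := by
      funext i
      have hs : Real.sqrt (d i) ≠ 0 := ne_of_gt (Real.sqrt_pos.mpr (hd i))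
      rw [← Real.mul_self_sqrt (hd i).le]
      field_simp
      rw [Real.sqrt_sq (Real.sqrt_nonneg _)]
    rw [hentry, Matrix.diagonal_one]
  -- Wn is invertible
  have hdet : IsUnit Wn.det := by
    have h1 : Wnᵀ.det * Rn.det * Wn.det = 1 := by
      rw [← Matrix.det_mul, ← Matrix.det_mul, hRnW, Matrix.det_one]
    rw [Matrix.det_transpose] at h1
    refine isUnit_iff_ne_zero.mpr fun h => ?_
    rw [h] at h1; simp at h1
  have hWn0 : Wn ≠ 0 := by
    intro h
    rw [h, Matrix.det_zero] at hdet
    exact isUnit_iff_ne_zero.mp hdet rfl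
  have hWinv : Wn * Wn⁻¹ = 1 := Matrix.mul_nonsing_inv _ hdet
  -- A := Wnᵀ * R * Wn is PSD
  have hA_psd : (Wnᵀ * R * Wn).PosSemidef := by
    have h := hR.conjTranspose_mul_mul_same Wn
    rwa [Matrix.conjTranspose_eq_transpose_of_trivial] at h
  have hlmax0 : 0 ≤ lmax := hlmax ▸ maxEig_nonneg hK hA_psd
  -- denominator positivity
  have claim1 : ∀ X : Matrix (Fin K) (Fin K) ℝ, X ≠ 0 →
      0 < matSpectralNormL2 (Xᵀ * Rn * X) := by
    intro X hX
    have hpsd : (Xᵀ * Rn * X).PosSemidef := by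
      have h := hRn.posSemidef.conjTranspose_mul_mul_same X
      rwa [Matrix.conjTranspose_eq_transpose_of_trivial] at h
    obtain ⟨i, j, hij⟩ : ∃ i j, X i j ≠ 0 := by
      by_contra h
      push_neg at h
      exact hX (Matrix.ext fun i j => h i j)
    have hw0 : X *ᵥ Pi.single j 1 ≠ 0 := by
      intro h
      apply hij
      have := congrFun h i
      simpa [Matrix.mulVec_single] using this
    have hquad : 0 < Pi.single j 1 ⬝ᵥ ((Xᵀ * Rn * X) *ᵥ Pi.single j 1) := by
      rw [conj_quad]
      have h2 := hRn.dotProduct_mulVec_pos hw0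
      simpa using h2
    rw [spectralNorm_psd hK hpsd]
    exact maxEig_pos hK hpsd hquad
  -- attainment at Wn
  have claim4 : matSpectralNormL2 (Wnᵀ * R * Wn) / matSpectralNormL2 (Wnᵀ * Rn * Wn) = lmax := by
    rw [hRnW, spectralNorm_psd hK Matrix.PosSemidef.one, maxEig_one hK, div_one,
      spectralNorm_psd hK hA_psd, hlmax]
  -- upper bound
  have claim_ub : ∀ y ∈ {y : ℝ | ∃ X : Matrix (Fin K) (Fin K) ℝ, X ≠ 0 ∧
      y = matSpectralNormL2 (Xᵀ * R * X) / matSpectralNormL2 (Xᵀ * Rn * X)}, y ≤ lmax := by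
    rintro y ⟨X, hX, rfl⟩
    have hXY : X = Wn * (Wn⁻¹ * X) := by
      rw [← Matrix.mul_assoc, hWinv, Matrix.one_mul]
    set Y : Matrix (Fin K) (Fin K) ℝ := Wn⁻¹ * X with hY
    have hden : Xᵀ * Rn * X = Yᵀ * Y := by
      conv_lhs => rw [hXY]
      have h1 : (Wn * Y)ᵀ * Rn * (Wn * Y) = Yᵀ * (Wnᵀ * Rn * Wn) * Y := by
        simp only [Matrix.transpose_mul, Matrix.mul_assoc]
      rw [h1, hRnW, Matrix.mul_one]
    have hnum2 : Xᵀ * R * X = Yᵀ * (Wnᵀ * R * Wn) * Y := by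
      conv_lhs => rw [hXY]
      simp only [Matrix.transpose_mul, Matrix.mul_assoc]
    have hYY_psd : (Yᵀ * Y).PosSemidef := by
      have h := Matrix.posSemidef_conjTranspose_mul_self Y
      rwa [Matrix.conjTranspose_eq_transpose_of_trivial] at h
    have hYAY_psd : (Yᵀ * (Wnᵀ * R * Wn) * Y).PosSemidef := by
      have h := hA_psd.conjTranspose_mul_mul_same Y
      rwa [Matrix.conjTranspose_eq_transpose_of_trivial] at h
    have hkey : maxEig (Yᵀ * (Wnᵀ * R * Wn) * Y) ≤ lmax * maxEig (Yᵀ * Y) := by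
      apply maxEig_le hK hYAY_psd.1
      intro v
      calc v ⬝ᵥ ((Yᵀ * (Wnᵀ * R * Wn) * Y) *ᵥ v)
          = (Y *ᵥ v) ⬝ᵥ ((Wnᵀ * R * Wn) *ᵥ (Y *ᵥ v)) := conj_quad _ _ _
        _ ≤ lmax * ((Y *ᵥ v) ⬝ᵥ (Y *ᵥ v)) := by
            rw [hlmax]; exact quad_le_maxEig hK hA_psd.1 (Y *ᵥ v)
        _ = lmax * (v ⬝ᵥ ((Yᵀ * Y) *ᵥ v)) := by rw [self_quad]
        _ ≤ lmax * (maxEig (Yᵀ * Y) * (v ⬝ᵥ v)) :=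
            mul_le_mul_of_nonneg_left (quad_le_maxEig hK hYY_psd.1 v) hlmax0
        _ = lmax * maxEig (Yᵀ * Y) * (v ⬝ᵥ v) := by ring
    have hYYpos : 0 < maxEig (Yᵀ * Y) := by
      have h := claim1 X hX
      rwa [hden, spectralNorm_psd hK hYY_psd] at h
    rw [hnum2, hden, spectralNorm_psd hK hYAY_psd, spectralNorm_psd hK hYY_psd,
      div_le_iff₀ hYYpos]
    exact hkey
  exact ⟨claim1, ⟨⟨Wn, hWn0, claim4.symm⟩, claim_ub⟩, hWn0, claim4⟩
end

section
/- Let K be a positive integer, let R be a real symmetric positive semidefinite K×K matrix, and let R_n be a real symmetric positive definite K×K matrix with eigendecomposition R_n = Φ_n Λ_n Φ_nᵀ, where Φ_n is orthogonal and Λ_n is diagonal with strictly positive diagonal entries. Set W_n = Φ_n Λ_n^{-1/2} and R_adj = W_nᵀ R W_n, and let λ_max be the largest eigenvalue of R_adj. Let Φ_adj be any orthogonal K×K matrix such that Φ_adjᵀ R_adj Φ_adj is diagonal (i.e., the columns of Φ_adj are eigenvectors of R_adj). Then the SNR rescaling functional attains the value λ_max at X = W_n Φ_adj; that is, ‖(W_nΦ_adj)ᵀ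 R (W_nΦ_adj)‖₂ / ‖(W_nΦ_adj)ᵀ R_n (W_nΦ_adj)‖₂ = λ_max. -/
open Matrix

/-- The spectral (L² operator) norm: ‖X‖₂ = √(λ_max(Xᵀ X)). -/
noncomputable def matSpectralNorm {K : ℕ} (X : Matrix (Fin K) (Fin K) ℝ) : ℝ :=
  Real.sqrt (maxEig (Xᵀ * X))

/-- For any orthogonal `Φ_adj` diagonalizing `R_adj = Wₙᵀ R Wₙ`, the SNR
rescaling functional attains `λ_max(R_adj)` at `X = Wₙ Φ_adj`. -/
theorem snr_attained_at_whitening_rotated (K : ℕ) (hK : 0 < K)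
    (R Rn Φ : Matrix (Fin K) (Fin K) ℝ) (d : Fin K → ℝ)
    (hR : R.PosSemidef) (hRn : Rn.PosDef)
    (hΦ : Φᵀ * Φ = 1) (hd : ∀ i, 0 < d i)
    (hdecomp : Rn = Φ * Matrix.diagonal d * Φᵀ)
    (Wn : Matrix (Fin K) (Fin K) ℝ) (hWn : Wn = Φ * invSqrtDiag d)
    (lmax : ℝ) (hlmax : lmax = maxEig (Wnᵀ * R * Wn))
    (Φadj : Matrix (Fin K) (Fin K) ℝ)
    (hΦadj : Φadjᵀ * Φadj = 1)
    (hdiag : (Φadjᵀ * (Wnᵀ * R * Wn) * Φadj).IsDiag) :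
    matSpectralNorm ((Wn * Φadj)ᵀ * R * (Wn * Φadj)) /
      matSpectralNorm ((Wn * Φadj)ᵀ * Rn * (Wn * Φadj)) = lmax := by
  haveI : Nonempty (Fin K) := Fin.pos_iff_nonempty.mp hK
  set M := Wnᵀ * R * Wn with hM
  set D := Φadjᵀ * M * Φadj with hD
  set f : Fin K → ℝ := D.diag with hf
  -- Φadj is also right-orthogonal
  have hΦadj' : Φadj * Φadjᵀ = 1 := mul_eq_one_comm.mp hΦadj
  -- whitening: Wnᵀ Rn Wn = 1
  have hwhite : Wnᵀ * Rn * Wn = 1 := by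
    have hS : (invSqrtDiag d)ᵀ = invSqrtDiag d := by
      simp [invSqrtDiag, Matrix.diagonal_transpose]
    rw [hWn, hdecomp, Matrix.transpose_mul, hS]
    have : invSqrtDiag d * Φᵀ * (Φ * Matrix.diagonal d * Φᵀ) * (Φ * invSqrtDiag d)
        = invSqrtDiag d * (Φᵀ * Φ) * Matrix.diagonal d * (Φᵀ * Φ) * invSqrtDiag d := by
      noncomm_ring
    rw [this, hΦ, mul_one, mul_one, invSqrtDiag, Matrix.diagonal_mul_diagonal,
      Matrix.diagonal_mul_diagonal]
    convert Matrix.diagonal_one using 2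
    funext i
    have h0 := (hd i).le
    have hne : Real.sqrt (d i) ≠ 0 := ne_of_gt (Real.sqrt_pos.mpr (hd i))
    have hms : Real.sqrt (d i) * Real.sqrt (d i) = d i := Real.mul_self_sqrt h0
    field_simp [hms]
    rw [Real.sq_sqrt h0]
  -- denominator matrix is 1
  have hden : (Wn * Φadj)ᵀ * Rn * (Wn * Φadj) = 1 := by
    rw [Matrix.transpose_mul]
    calc Φadjᵀ * Wnᵀ * Rn * (Wn * Φadj) = Φadjᵀ * (Wnᵀ * Rn * Wn) * Φadj := by noncomm_ring
    _ = 1 := by rw [hwhite, mul_one, hΦadj]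
  -- numerator matrix is D
  have hnum : (Wn * Φadj)ᵀ * R * (Wn * Φadj) = D := by
    rw [Matrix.transpose_mul, hD, hM]; noncomm_ring
  -- D is diagonal
  have hDdiag : D = Matrix.diagonal f := (hdiag.diagonal_diag).symm
  -- D is PSD
  have hDpsd : D.PosSemidef := by
    have := hR.conjTranspose_mul_mul_same (Wn * Φadj)
    rw [Matrix.conjTranspose_eq_transpose_of_trivial] at this
    rwa [hnum] at this
  have hfnn : ∀ i, 0 ≤ f i := fun i => by
    simpa [hf] using hDpsd.2 (Finsupp.single i 1)
  -- the sup of the range of f is attained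
  have hfin : (Set.range f).Finite := Set.finite_range f
  have hne : (Set.range f).Nonempty := Set.range_nonempty f
  obtain ⟨i0, hi0⟩ := hne.csSup_mem hfin
  have hsup : sSup (Set.range f) = f i0 := hi0.symm
  have hub : ∀ i, f i ≤ f i0 := fun i =>
    hsup ▸ le_csSup hfin.bddAbove (Set.mem_range_self i)
  -- lmax = sSup (spectrum D) = f i0
  have hspecM : spectrum ℝ M = spectrum ℝ D := by
    have hMconj : M = Φadj * D * Φadjᵀ := by
      rw [hD]
      calc M = (Φadj * Φadjᵀ) * M * (Φadj * Φadjᵀ) := by rw [hΦadj']; simp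
      _ = Φadj * (Φadjᵀ * M * Φadj) * Φadjᵀ := by noncomm_ring
    let u : (Matrix (Fin K) (Fin K) ℝ)ˣ := ⟨Φadj, Φadjᵀ, hΦadj', hΦadj⟩
    have h2 : M = (u : Matrix (Fin K) (Fin K) ℝ) * D * ((u⁻¹ : (Matrix (Fin K) (Fin K) ℝ)ˣ) : Matrix (Fin K) (Fin K) ℝ) := hMconj
    rw [h2, spectrum.units_conjugate]
  have hlmax' : lmax = f i0 := by
    rw [hlmax, maxEig, hspecM, hDdiag, spectrum_diagonal, hsup]
  -- denominator norm = 1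
  have hdenn : matSpectralNorm ((Wn * Φadj)ᵀ * Rn * (Wn * Φadj)) = 1 := by
    rw [hden, matSpectralNorm, maxEig]
    have : (1 : Matrix (Fin K) (Fin K) ℝ)ᵀ * 1 = 1 := by simp
    rw [this, spectrum.one_eq]
    simp
  -- numerator norm = f i0
  have hnumn : matSpectralNorm ((Wn * Φadj)ᵀ * R * (Wn * Φadj)) = f i0 := by
    rw [hnum, matSpectralNorm, maxEig]
    have hDT : Dᵀ = D := by rw [hDdiag, Matrix.diagonal_transpose]
    have hDD : Dᵀ * D = Matrix.diagonal (fun i => f i * f i) := by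
      rw [hDT, hDdiag, Matrix.diagonal_mul_diagonal]
    rw [hDD, spectrum_diagonal]
    have hsup2 : sSup (Set.range fun i => f i * f i) = f i0 * f i0 := by
      apply le_antisymm
      · apply csSup_le (Set.range_nonempty _)
        rintro x ⟨i, rfl⟩
        exact mul_le_mul (hub i) (hub i) (hfnn i) (hfnn i0)
      · exact le_csSup (Set.finite_range _).bddAbove (Set.mem_range_self i0)
    rw [hsup2, Real.sqrt_mul_self (hfnn i0)]
  rw [hdenn, hnumn, div_one, hlmax']
end
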